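/- Let {X_ℓ, f_ℓ} and {Y_ℓ, g_ℓ} be inverse sequences of compact metric spaces with surjective continuous bonding functions, and let g : varprojlim{X_ℓ, f_ℓ} → varprojlim{Y_ℓ, g_ℓ} be a continuous function. Then there are sequences (n_ℓ) and (m_ℓ) of positive integers such that: (1) m_{k+1} ≥ m_k and n_{k+1} > n_k for each positive integer k; (2) m_k ≥ n_k for each positive integer k; (3) for each positive integer k, each j ∈ {1, …, n_k}, each positive integer r > k, and each x ∈ X_{m_r}, g_{j,n_r}(T_{n_r,m_r}(g)(x)) ⊆ g_{j,n_k}(T_{n_k,m_k}(g)(f_{m_k,m_r}(x))); (4) for each positive integer k, each j ∈ {1, …, n_k}, and each x ∈ varprojlim{X_ℓ, f_ℓ}, q_j(g(x)) ∈ g_{j,n_k}(T_{n_k,m_k}(g)(p_{m_k}(x))); (5) for each positive integer j and each x ∈ varprojlim{X_ℓ, f_ℓ}, lim_{k→∞} diam(g_{j,n_k}(T_{n_k,m_k}(g)(p_{m_k}(x)))) = 0. -/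
import Mathlib


open Metric Filter Set Function

/-- The inverse limit of an inverse sequence `{X n, f n}` of spaces with
single-valued bonding maps `f n : X (n+1) → X n`. -/
def invLim (X : ℕ → Type*) (f : ∀ n, X (n + 1) → X n) : Set (∀ n, X n) :=
  {x | ∀ n, x n = f n (x (n + 1))}

/-- The composite bonding map `f_{n,m} : X m → X n` for `n ≤ m`. -/
def bondMap {X : ℕ → Type*} (f : ∀ n, X (n + 1) → X n) {n m : ℕ} (h : n ≤ m) :
    X m → X n :=
  Nat.leRecOn (C := fun k => X k → X n) h (fun {k} g => g ∘ f k) id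

/-- A set-valued function is upper semicontinuous (with nonempty closed values):
all of its values are nonempty closed sets and its graph is closed. -/
def IsUSC {A B : Type*} [TopologicalSpace A] [TopologicalSpace B] (F : A → Set B) : Prop :=
  (∀ a, (F a).Nonempty) ∧ (∀ a, IsClosed (F a)) ∧ IsClosed {p : A × B | p.2 ∈ F p.1}

/-- The `T_{n,m}` transformation of a map between inverse limits:
`T_{n,m}(g)(x) = q_n (g (p_m ⁻¹ x))`. -/
def Ttrans {X Y : ℕ → Type*} {f : ∀ n, X (n + 1) → X n} {gs : ∀ n, Y (n + 1) → Y n}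
    (g : ↥(invLim X f) → ↥(invLim Y gs)) (n m : ℕ) (x : X m) : Set (Y n) :=
  {y | ∃ z : ↥(invLim X f), z.1 m = x ∧ (g z).1 n = y}

/-- A space has the fixed point property if every continuous self-map has a fixed point. -/
def HasFPP (Z : Type*) [TopologicalSpace Z] : Prop :=
  ∀ g : Z → Z, Continuous g → ∃ p, g p = p

lemma bondMap_self {X : ℕ → Type*} (f : ∀ n, X (n + 1) → X n) {n : ℕ} (x : X n) :
    bondMap f le_rfl x = x := by
  unfold bondMap
  rw [Nat.leRecOn_self]
  rfl

lemma bondMap_succ {X : ℕ → Type*} (f : ∀ n, X (n + 1) → X n) {n m : ℕ} (h : n ≤ m)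
    (x : X (m + 1)) : bondMap f (h.trans (Nat.le_succ m)) x = bondMap f h (f m x) := by
  unfold bondMap
  rw [Nat.leRecOn_succ h]
  rfl

lemma invLim.bond_apply {X : ℕ → Type*} {f : ∀ n, X (n + 1) → X n}
    (z : ↥(invLim X f)) {n m : ℕ} (h : n ≤ m) :
    bondMap f h (z.1 m) = z.1 n := by
  induction m, h using Nat.le_induction with
  | base => exact bondMap_self f _
  | succ m h ih =>
    calc bondMap f (h.trans (Nat.le_succ m)) (z.1 (m + 1))
        = bondMap f h (f m (z.1 (m + 1))) := bondMap_succ f h _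
      _ = bondMap f h (z.1 m) := by rw [← z.2 m]
      _ = z.1 n := ih

lemma Ttrans_image {X Y : ℕ → Type*} {f : ∀ n, X (n + 1) → X n} {gs : ∀ n, Y (n + 1) → Y n}
    (g : ↥(invLim X f) → ↥(invLim Y gs)) {j n m : ℕ} (hj : j ≤ n) (x : X m) :
    bondMap gs hj '' Ttrans g n m x =
      {y | ∃ z : ↥(invLim X f), z.1 m = x ∧ (g z).1 j = y} := by
  ext y
  constructor
  · rintro ⟨w, ⟨z, hzm, rfl⟩, rfl⟩
    exact ⟨z, hzm, invLim.bond_apply (g z) hj |>.symm⟩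
  · rintro ⟨z, hzm, rfl⟩
    exact ⟨(g z).1 n, ⟨z, hzm, rfl⟩, invLim.bond_apply (g z) hj⟩


lemma isClosed_invLim {X : ℕ → Type*} [∀ n, MetricSpace (X n)]
    (f : ∀ n, X (n + 1) → X n) (hfc : ∀ n, Continuous (f n)) :
    IsClosed (invLim X f) := by
  have : invLim X f = ⋂ n, {x : ∀ n, X n | x n = f n (x (n + 1))} := by
    ext x; simp [invLim, mem_iInter]
  rw [this]
  exact isClosed_iInter fun n =>
    isClosed_eq (continuous_apply n) ((hfc n).comp (continuous_apply (n + 1)))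

lemma key_unif {X Y : ℕ → Type*} [∀ n, MetricSpace (X n)] [∀ n, CompactSpace (X n)]
    [∀ n, MetricSpace (Y n)]
    {f : ∀ n, X (n + 1) → X n} {gs : ∀ n, Y (n + 1) → Y n}
    (hfc : ∀ n, Continuous (f n))
    (g : ↥(invLim X f) → ↥(invLim Y gs)) (hg : Continuous g)
    (j : ℕ) {ε : ℝ} (hε : 0 < ε) :
    ∃ m, ∀ z z' : ↥(invLim X f), z.1 m = z'.1 m →
      dist ((g z).1 j) ((g z').1 j) < ε := by
  haveI : CompactSpace ↥(invLim X f) :=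
    isCompact_iff_compactSpace.mp (isClosed_invLim f hfc).isCompact
  by_contra h
  push_neg at h
  have hφ : Continuous fun z : ↥(invLim X f) => (g z).1 j :=
    ((continuous_apply j).comp continuous_subtype_val).comp hg
  set V : Set (↥(invLim X f) × ↥(invLim X f)) := {p | ε ≤ dist ((g p.1).1 j) ((g p.2).1 j)} with hV
  have hVc : IsClosed V :=
    isClosed_le continuous_const ((hφ.comp continuous_fst).dist (hφ.comp continuous_snd))
  set U : ℕ → Set (↥(invLim X f) × ↥(invLim X f)) := fun m => {p | p.1.1 m = p.2.1 m} with hU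
  have hUc : ∀ m, IsClosed (U m) := fun m =>
    isClosed_eq ((continuous_apply m).comp (continuous_subtype_val.comp continuous_fst))
      ((continuous_apply m).comp (continuous_subtype_val.comp continuous_snd))
  have hUanti : ∀ {a b : ℕ}, a ≤ b → U b ⊆ U a := by
    intro a b hab p hp
    have := invLim.bond_apply p.1 hab
    have h2 := invLim.bond_apply p.2 hab
    simp only [hU, mem_setOf_eq] at hp ⊢
    rw [← this, ← h2, hp]
  have hne : (V ∩ ⋂ m, U m).Nonempty := by
    refine hVc.isCompact.inter_iInter_nonempty U hUc fun u => ?_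
    obtain ⟨z, z', hzz, hd⟩ := h (u.sup id)
    refine ⟨(z, z'), hd, ?_⟩
    simp only [mem_iInter₂]
    intro i hi
    exact hUanti (Finset.le_sup (f := id) hi) hzz
  obtain ⟨p, hpV, hpU⟩ := hne
  have : p.1 = p.2 := by
    apply Subtype.ext; funext m
    exact (mem_iInter.mp hpU) m
  have hd0 : dist ((g p.1).1 j) ((g p.2).1 j) = 0 := by rw [this, dist_self]
  have : ε ≤ (0:ℝ) := hd0 ▸ hpV
  linarith

theorem stmt5
    {X Y : ℕ → Type*} [∀ n, MetricSpace (X n)] [∀ n, CompactSpace (X n)]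
    [∀ n, MetricSpace (Y n)] [∀ n, CompactSpace (Y n)]
    (f : ∀ n, X (n + 1) → X n) (gs : ∀ n, Y (n + 1) → Y n)
    (hfc : ∀ n, Continuous (f n)) (hfs : ∀ n, Surjective (f n))
    (hgc : ∀ n, Continuous (gs n)) (hgs : ∀ n, Surjective (gs n))
    (g : ↥(invLim X f) → ↥(invLim Y gs)) (hg : Continuous g) :
    ∃ ns ms : ℕ → ℕ,
      (∀ k, ms k ≤ ms (k + 1)) ∧ (∀ k, ns k < ns (k + 1)) ∧
      (∀ k, ns k ≤ ms k) ∧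
      (∀ k r : ℕ, k < r → ∀ (hnr : ns k ≤ ns r) (hmr : ms k ≤ ms r),
        ∀ j : ℕ, ∀ hj : j ≤ ns k, ∀ x : X (ms r),
          bondMap gs (hj.trans hnr) '' Ttrans g (ns r) (ms r) x ⊆
            bondMap gs hj '' Ttrans g (ns k) (ms k) (bondMap f hmr x)) ∧
      (∀ k j : ℕ, ∀ hj : j ≤ ns k, ∀ z : ↥(invLim X f),
        (g z).1 j ∈ bondMap gs hj '' Ttrans g (ns k) (ms k) (z.1 (ms k))) ∧
      (∀ j : ℕ, ∀ z : ↥(invLim X f),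
        Tendsto (fun k =>
            diam (if hj : j ≤ ns k then
              bondMap gs hj '' Ttrans g (ns k) (ms k) (z.1 (ms k))
            else (∅ : Set (Y j))))
          atTop (nhds (0 : ℝ))) := by
  -- choose moduli of continuity
  have hkey : ∀ j k : ℕ, ∃ m, ∀ z z' : ↥(invLim X f), z.1 m = z'.1 m →
      dist ((g z).1 j) ((g z').1 j) < 1 / (k + 1 : ℝ) := fun j k =>
    key_unif hfc g hg j (by positivity)
  choose M hM using hkey
  set B : ℕ → ℕ := fun k => max k ((Finset.range (k + 1)).sup fun j => M j k) with hB
  refine ⟨id, fun k => (Finset.range (k + 1)).sup B, ?_, fun k => lt_add_one k, ?_, ?_, ?_, ?_⟩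
  · intro k
    exact Finset.sup_mono (Finset.range_subset_range.mpr (Nat.le_succ _))
  · intro k
    calc (k : ℕ) ≤ B k := le_max_left _ _
      _ ≤ _ := Finset.le_sup (Finset.self_mem_range_succ k)
  · intro k r hkr hnr hmr j hj x
    rw [Ttrans_image g (hj.trans hnr), Ttrans_image g hj]
    rintro y ⟨z, hzm, rfl⟩
    refine ⟨z, ?_, rfl⟩
    rw [← hzm]
    exact (invLim.bond_apply z hmr).symm
  · intro k j hj z
    rw [Ttrans_image g hj]
    exact ⟨z, rfl, rfl⟩
  · intro j z
    have hMle : ∀ k, j ≤ k → M j k ≤ (Finset.range (k + 1)).sup B := by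
      intro k hjk
      calc M j k ≤ (Finset.range (k + 1)).sup fun j => M j k :=
            Finset.le_sup (f := fun j => M j k) (Finset.mem_range.mpr (Nat.lt_succ_of_le hjk))
        _ ≤ B k := le_max_right _ _
        _ ≤ _ := Finset.le_sup (Finset.self_mem_range_succ k)
    have hbound : ∀ᶠ k : ℕ in atTop,
        diam (if hj : j ≤ id k then
            bondMap gs hj '' Ttrans g (id k) ((Finset.range (k + 1)).sup B)
              (z.1 ((Finset.range (k + 1)).sup B))
          else (∅ : Set (Y j))) ≤ 1 / (k + 1 : ℝ) := by
      filter_upwards [eventually_ge_atTop j] with k hk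
      rw [dif_pos (show j ≤ id k from hk)]
      rw [Ttrans_image g (show j ≤ id k from hk)]
      apply diam_le_of_forall_dist_le (by positivity)
      rintro y ⟨w, hw, rfl⟩ y' ⟨w', hw', rfl⟩
      have hagree : w.1 (M j k) = w'.1 (M j k) := by
        have h1 := invLim.bond_apply w (hMle k hk)
        have h2 := invLim.bond_apply w' (hMle k hk)
        rw [← h1, ← h2, hw, hw']
      exact (hM j k w w' hagree).le
    exact squeeze_zero' (Eventually.of_forall fun k => diam_nonneg) hbound
      tendsto_one_div_add_atTop_nhds_zero_nat
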